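/- There exists a constant C > 0 such that for every t > 0 and every r with 0 < r < 2t, the Lebesgue measure of the set {θ ∈ [0, 2π] : dist(k_θ · (e^{−2t}·i), e^{−2t}·i) ≤ r} is at most C·e^{−2t+r}. -/

import Mathlib

open UpperHalfPlane MeasureTheory

/-- The rotation matrix `[[cos θ, sin θ], [−sin θ, cos θ]]` as an element of `SL(2, ℝ)`. -/
noncomputable def rotSL (θ : ℝ) : Matrix.SpecialLinearGroup (Fin 2) ℝ :=
  ⟨!![Real.cos θ, Real.sin θ; -Real.sin θ, Real.cos θ], by
    rw [Matrix.det_fin_two_of]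
    nlinarith [Real.sin_sq_add_cos_sq θ]⟩

/-- The point `e^{−2t}·i` of the hyperbolic upper half-plane. -/
noncomputable def ptI (t : ℝ) : UpperHalfPlane :=
  ⟨⟨0, Real.exp (-(2 * t))⟩, by simpa using Real.exp_pos (-(2 * t))⟩

set_option maxHeartbeats 1000000 in
/-- Key analytic estimate: if `dist (k_θ • p_t, p_t) ≤ r` with `0 < r < 2t`, then
`|sin θ| ≤ e^{-2t} e^r / 2`. -/
lemma abs_sin_le_of_dist_le (θ t r : ℝ) (ht : 0 < t) (hr : 0 < r) (hrt : r < 2 * t)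
    (h : dist (rotSL θ • ptI t) (ptI t) ≤ r) :
    |Real.sin θ| ≤ Real.exp (-(2 * t)) * Real.exp r / 2 := by
  set y : ℝ := Real.exp (-(2 * t)) with hy_def
  set s : ℝ := Real.sin θ with hs_def
  set c : ℝ := Real.cos θ with hc_def
  have hy : 0 < y := Real.exp_pos _
  have hy1 : y < 1 := by
    rw [hy_def]
    calc Real.exp (-(2 * t)) < Real.exp 0 := Real.exp_lt_exp.mpr (by linarith)
    _ = 1 := Real.exp_zero
  have hsc : s ^ 2 + c ^ 2 = 1 := Real.sin_sq_add_cos_sq θ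
  -- compute the denominator and numerator of the Möbius action
  have hden : denom (rotSL θ) (ptI t) = (c : ℂ) - s * y * Complex.I := by
    rw [UpperHalfPlane.denom, Matrix.SpecialLinearGroup.coe_GL_coe_matrix]
    simp [UpperHalfPlane.denom, rotSL, ptI, UpperHalfPlane.coe, -Complex.ofReal_exp,
      -Complex.ofReal_sin, -Complex.ofReal_cos, Complex.ext_iff, hs_def, hc_def, hy_def]
  have hnum : num (rotSL θ) (ptI t) = (s : ℂ) + c * y * Complex.I := by
    rw [UpperHalfPlane.num, Matrix.SpecialLinearGroup.coe_GL_coe_matrix]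
    simp [UpperHalfPlane.num, rotSL, ptI, UpperHalfPlane.coe, -Complex.ofReal_exp,
      -Complex.ofReal_sin, -Complex.ofReal_cos, Complex.ext_iff, hs_def, hc_def, hy_def]
  set D : ℝ := c ^ 2 + s ^ 2 * y ^ 2 with hD_def
  have hD : 0 < D := by nlinarith [sq_nonneg c, sq_nonneg s, sq_nonneg (s * y)]
  have hDne : D ≠ 0 := ne_of_gt hD
  have hnormSq : Complex.normSq (denom (rotSL θ) (ptI t)) = D := by
    rw [hden]
    simp [Complex.normSq_apply, hD_def]
    ring
  -- imaginary part of the image point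
  have hdenne : denom (rotSL θ) (ptI t) ≠ 0 := UpperHalfPlane.denom_ne_zero _ _
  have hcoe : ((rotSL θ • ptI t : UpperHalfPlane) : ℂ)
      = num (rotSL θ) (ptI t) / denom (rotSL θ) (ptI t) := by
    rw [MulAction.compHom_smul_def, coe_smul_of_det_pos (by simp)]
    rfl
  have hns : Complex.normSq ((c:ℂ) - s * y * Complex.I) = D := by
    rw [← hden]; exact hnormSq
  have him : (rotSL θ • ptI t).im = y / D := by
    rw [← UpperHalfPlane.coe_im, hcoe, hnum, hden, Complex.div_im, hns]
    simp only [Complex.add_im, Complex.add_re, Complex.mul_im, Complex.mul_re,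
      Complex.I_re, Complex.I_im, Complex.sub_re, Complex.sub_im,
      Complex.ofReal_re, Complex.ofReal_im]
    rw [div_sub_div_same, div_eq_div_iff hDne hDne]
    linear_combination y * D * hsc
  have hzcoe : ((ptI t : UpperHalfPlane) : ℂ) = (y : ℂ) * Complex.I := by
    simp [ptI, UpperHalfPlane.coe, Complex.ext_iff, -Complex.ofReal_exp, hy_def]
  have hdiff : ((rotSL θ • ptI t : UpperHalfPlane) : ℂ) - ((ptI t : UpperHalfPlane) : ℂ)
      = (((s * (1 - y ^ 2) : ℝ)) : ℂ) / denom (rotSL θ) (ptI t) := by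
    rw [hcoe, div_sub' hdenne, hnum, hden, hzcoe]
    congr 1
    push_cast
    ring_nf
    rw [Complex.I_sq]
    ring
  have hdistsq : dist ((rotSL θ • ptI t : UpperHalfPlane) : ℂ) ((ptI t : UpperHalfPlane) : ℂ) ^ 2
      = s ^ 2 * (1 - y ^ 2) ^ 2 / D := by
    rw [Complex.dist_eq, Complex.sq_norm, hdiff, Complex.normSq_div, Complex.normSq_ofReal,
      hnormSq]
    congr 1
    ring
  -- the cosh-distance identity
  have hcosh := UpperHalfPlane.cosh_dist (rotSL θ • ptI t) (ptI t)
  rw [hdistsq, him] at hcosh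
  have himz : (ptI t).im = y := rfl
  rw [himz] at hcosh
  have hfrac : s ^ 2 * (1 - y ^ 2) ^ 2 / D / (2 * (y / D) * y)
      = s ^ 2 * (1 - y ^ 2) ^ 2 / (2 * y ^ 2) := by
    rw [div_div]
    congr 1
    field_simp
  rw [hfrac] at hcosh
  -- monotonicity of cosh
  have hmono : Real.cosh (dist (rotSL θ • ptI t) (ptI t)) ≤ Real.cosh r := by
    rw [Real.cosh_le_cosh, abs_of_nonneg dist_nonneg, abs_of_pos hr]
    exact h
  rw [hcosh] at hmono
  have h2y : (0:ℝ) < 2 * y ^ 2 := by positivity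
  have hx : s ^ 2 * (1 - y ^ 2) ^ 2 / (2 * y ^ 2) ≤ Real.cosh r - 1 := by linarith
  have hs2 : s ^ 2 * (1 - y ^ 2) ^ 2 ≤ 2 * y ^ 2 * (Real.cosh r - 1) := by
    have h11 := (div_le_iff₀ h2y).mp hx
    linarith [h11]
  -- now pure real-variable estimates
  set E : ℝ := Real.exp r with hE_def
  have hE1 : 1 < E := by
    rw [hE_def]
    calc (1:ℝ) = Real.exp 0 := Real.exp_zero.symm
    _ < Real.exp r := Real.exp_lt_exp.mpr hr
  have hE0 : (0:ℝ) < E := by linarith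
  have hcoshr : Real.cosh r - 1 = (E - 1) ^ 2 / (2 * E) := by
    rw [Real.cosh_eq, Real.exp_neg, ← hE_def]
    field_simp
    ring
  have h2 : y ^ 2 * E ^ 2 ≤ 1 := by
    have he : y ^ 2 * E ^ 2 = Real.exp (-(2 * t) + -(2 * t) + (r + r)) := by
      rw [hy_def, hE_def, Real.exp_add, Real.exp_add, Real.exp_add]
      ring
    rw [he]
    calc Real.exp (-(2 * t) + -(2 * t) + (r + r)) ≤ Real.exp 0 :=
      Real.exp_le_exp.mpr (by linarith)
    _ = 1 := Real.exp_zero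
  have h3 : (E ^ 2 - 1) / E ^ 2 ≤ 1 - y ^ 2 := by
    rw [div_le_iff₀ (by positivity)]
    nlinarith [h2]
  have h3nonneg : 0 ≤ (E ^ 2 - 1) / E ^ 2 :=
    div_nonneg (by nlinarith) (by positivity)
  have h4 : s ^ 2 * ((E ^ 2 - 1) / E ^ 2) ^ 2 ≤ s ^ 2 * (1 - y ^ 2) ^ 2 := by
    apply mul_le_mul_of_nonneg_left _ (sq_nonneg s)
    exact pow_le_pow_left₀ h3nonneg h3 2
  have h5 : s ^ 2 * ((E ^ 2 - 1) / E ^ 2) ^ 2 ≤ 2 * y ^ 2 * ((E - 1) ^ 2 / (2 * E)) := by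
    calc s ^ 2 * ((E ^ 2 - 1) / E ^ 2) ^ 2 ≤ s ^ 2 * (1 - y ^ 2) ^ 2 := h4
    _ ≤ 2 * y ^ 2 * (Real.cosh r - 1) := hs2
    _ = 2 * y ^ 2 * ((E - 1) ^ 2 / (2 * E)) := by rw [hcoshr]
  -- clear denominators
  have h5' : s ^ 2 * (E ^ 2 - 1) ^ 2 * E ≤ y ^ 2 * (E - 1) ^ 2 * E ^ 4 := by
    have e1 : s ^ 2 * ((E ^ 2 - 1) / E ^ 2) ^ 2 = s ^ 2 * (E ^ 2 - 1) ^ 2 / E ^ 4 := by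
      rw [div_pow, mul_div_assoc]
      congr 1
      ring
    have e2 : 2 * y ^ 2 * ((E - 1) ^ 2 / (2 * E)) = y ^ 2 * (E - 1) ^ 2 / E := by
      rw [eq_div_iff hE0.ne']
      field_simp
    rw [e1, e2, div_le_div_iff₀ (by positivity) (by positivity)] at h5
    linarith [h5]
  -- divide by (E-1)^2 * E > 0
  have hpos : (0:ℝ) < (E - 1) ^ 2 * E := by
    have h9 : (0:ℝ) < (E - 1) ^ 2 := pow_pos (by linarith) 2
    exact mul_pos h9 hE0
  have hd1 : s ^ 2 * (E + 1) ^ 2 ≤ y ^ 2 * E ^ 3 := by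
    have h6 : s ^ 2 * (E + 1) ^ 2 * ((E - 1) ^ 2 * E) ≤ y ^ 2 * E ^ 3 * ((E - 1) ^ 2 * E) := by
      have e3 : s ^ 2 * (E + 1) ^ 2 * ((E - 1) ^ 2 * E) = s ^ 2 * (E ^ 2 - 1) ^ 2 * E := by ring
      have e4 : y ^ 2 * E ^ 3 * ((E - 1) ^ 2 * E) = y ^ 2 * (E - 1) ^ 2 * E ^ 4 := by ring
      rw [e3, e4]
      exact h5'
    exact le_of_mul_le_mul_right h6 hpos
  have hfinal : 4 * s ^ 2 ≤ y ^ 2 * E ^ 2 := by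
    have h7 : 4 * E * s ^ 2 ≤ s ^ 2 * (E + 1) ^ 2 := by linarith [sq_nonneg (s * (E - 1))]
    have h8 : 4 * s ^ 2 * E ≤ y ^ 2 * E ^ 2 * E := by linarith [hd1, h7]
    exact le_of_mul_le_mul_right h8 hE0
  -- conclude
  have h10 : s ^ 2 ≤ (y * E / 2) ^ 2 := by
    have he : (y * E / 2) ^ 2 = y ^ 2 * E ^ 2 / 4 := by ring
    rw [he]
    linarith [hfinal]
  have h12 := Real.sqrt_le_sqrt h10
  rwa [Real.sqrt_sq_eq_abs, Real.sqrt_sq (by positivity)] at h12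

/-- Containment of the small-sine set in three short intervals. -/
lemma sin_small_subset (δ : ℝ) (hδ : 0 < δ) :
    {θ ∈ Set.Icc (0:ℝ) (2 * Real.pi) | |Real.sin θ| ≤ δ} ⊆
      Set.Icc 0 (Real.pi * δ) ∪ Set.Icc (Real.pi - Real.pi * δ) (Real.pi + Real.pi * δ) ∪
        Set.Icc (2 * Real.pi - Real.pi * δ) (2 * Real.pi) := by
  have hπ : 0 < Real.pi := Real.pi_pos
  set a : ℝ := Real.pi * δ with ha_def
  have ha : 0 < a := by positivity
  intro θ hθ
  obtain ⟨⟨h0, h2π⟩, hsin⟩ := hθ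
  by_cases hbig : Real.pi / 2 ≤ a
  · -- the three intervals cover [0, 2π]
    rcases le_or_gt θ a with h | h
    · exact Or.inl (Or.inl ⟨h0, h⟩)
    rcases le_or_gt θ (Real.pi + a) with h' | h'
    · exact Or.inl (Or.inr ⟨by linarith, h'⟩)
    · exact Or.inr ⟨by linarith [Real.pi_pos], h2π⟩
  push_neg at hbig
  -- a < π/2; key: on (a, π - a), sin > δ
  have key : ∀ x : ℝ, a < x → x < Real.pi - a → δ < Real.sin x := by
    intro x h1 h2
    have hsa : 2 * δ ≤ Real.sin a := by
      have h2pa : 2 / Real.pi * a ≤ Real.sin a :=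
        Real.mul_le_sin (le_of_lt ha) (le_of_lt hbig)
      have he : 2 / Real.pi * a = 2 * δ := by
        rw [ha_def]
        field_simp
      linarith
    have hmono : Real.sin a < Real.sin x := by
      rcases le_or_gt x (Real.pi / 2) with hx | hx
      · exact Real.strictMonoOn_sin ⟨by linarith, by linarith⟩ ⟨by linarith, hx⟩ h1
      · rw [← Real.sin_pi_sub x]
        exact Real.strictMonoOn_sin ⟨by linarith, by linarith⟩ ⟨by linarith, by linarith⟩
          (by linarith)
    linarith
  by_contra hnot
  simp only [Set.mem_union, Set.mem_Icc, not_or, not_and_or, not_le] at hnot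
  obtain ⟨⟨hn1, hn2⟩, hn3⟩ := hnot
  have hA : a < θ := by
    rcases hn1 with h | h
    · linarith
    · exact h
  have hC : θ < 2 * Real.pi - a := by
    rcases hn3 with h | h
    · exact h
    · linarith
  rcases hn2 with h | h
  · -- θ < π - a : sin θ > δ
    have hk := key θ hA h
    have : δ < |Real.sin θ| := lt_of_lt_of_le hk (le_abs_self _)
    linarith
  · -- π + a < θ : use sin θ = -sin (θ - π)
    have hx : a < θ - Real.pi := by linarith
    have hx' : θ - Real.pi < Real.pi - a := by linarith
    have hkey := key (θ - Real.pi) hx hx'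
    have hsθ : Real.sin θ = -Real.sin (θ - Real.pi) := by
      conv_lhs => rw [show θ = (θ - Real.pi) + Real.pi by ring]
      rw [Real.sin_add_pi]
    have : δ < |Real.sin θ| := by
      rw [hsθ, abs_neg]
      exact lt_of_lt_of_le hkey (le_abs_self _)
    linarith

/-- Spherical measure estimate, `SO(2,1)` case: there is a constant `C > 0` so that for all
`t > 0` and `0 < r < 2t`, the Lebesgue measure of the set of angles `θ ∈ [0, 2π]` with
`dist (k_θ · e^{−2t} i, e^{−2t} i) ≤ r` is at most `C·e^{−2t+r}`. -/
theorem measure_rot_dist_le : ∃ C : ℝ, 0 < C ∧ ∀ t : ℝ, 0 < t → ∀ r : ℝ, 0 < r → r < 2 * t →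
    volume {θ ∈ Set.Icc (0 : ℝ) (2 * Real.pi) | dist (rotSL θ • ptI t) (ptI t) ≤ r}
      ≤ ENNReal.ofReal (C * Real.exp (-(2 * t) + r)) := by
  refine ⟨2 * Real.pi, by positivity, fun t ht r hr hrt => ?_⟩
  set δ : ℝ := Real.exp (-(2 * t)) * Real.exp r / 2 with hδ_def
  have hδ : 0 < δ := by positivity
  have hsub1 : {θ ∈ Set.Icc (0 : ℝ) (2 * Real.pi) | dist (rotSL θ • ptI t) (ptI t) ≤ r}
      ⊆ {θ ∈ Set.Icc (0:ℝ) (2 * Real.pi) | |Real.sin θ| ≤ δ} := by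
    intro θ hθ
    exact ⟨hθ.1, abs_sin_le_of_dist_le θ t r ht hr hrt hθ.2⟩
  have hsub := hsub1.trans (sin_small_subset δ hδ)
  calc volume {θ ∈ Set.Icc (0 : ℝ) (2 * Real.pi) | dist (rotSL θ • ptI t) (ptI t) ≤ r}
      ≤ volume (Set.Icc 0 (Real.pi * δ) ∪
          Set.Icc (Real.pi - Real.pi * δ) (Real.pi + Real.pi * δ) ∪
          Set.Icc (2 * Real.pi - Real.pi * δ) (2 * Real.pi)) := measure_mono hsub
  _ ≤ volume (Set.Icc (0:ℝ) (Real.pi * δ)) +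
        volume (Set.Icc (Real.pi - Real.pi * δ) (Real.pi + Real.pi * δ)) +
        volume (Set.Icc (2 * Real.pi - Real.pi * δ) (2 * Real.pi)) := by
      refine le_trans (measure_union_le _ _) ?_
      gcongr
      exact measure_union_le _ _
  _ = ENNReal.ofReal (Real.pi * δ - 0) + ENNReal.ofReal
        (Real.pi + Real.pi * δ - (Real.pi - Real.pi * δ)) +
        ENNReal.ofReal (2 * Real.pi - (2 * Real.pi - Real.pi * δ)) := by
      rw [Real.volume_Icc, Real.volume_Icc, Real.volume_Icc]
  _ = ENNReal.ofReal (4 * (Real.pi * δ)) := by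
      rw [show Real.pi * δ - 0 = Real.pi * δ by ring,
        show Real.pi + Real.pi * δ - (Real.pi - Real.pi * δ) = 2 * (Real.pi * δ) by ring,
        show 2 * Real.pi - (2 * Real.pi - Real.pi * δ) = Real.pi * δ by ring,
        ← ENNReal.ofReal_add (by positivity) (by positivity),
        ← ENNReal.ofReal_add (by positivity) (by positivity)]
      congr 1
      ring
  _ ≤ ENNReal.ofReal (2 * Real.pi * Real.exp (-(2 * t) + r)) := by
      apply ENNReal.ofReal_le_ofReal
      rw [Real.exp_add, hδ_def]
      apply le_of_eq
      ring
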